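/- arXiv:2202.01288 — 2 statements merged into one kernel-verified Lean document; each statement's English description precedes it below -/
import Mathlib

section
/- Proposition 3.3 (BC loss strictly exceeds the joint loss unless all demonstrators are identical): assume w(i,s) = μ(s)/m with μ(s) > 0 for all s and ∑_s μ(s) = 1 (every demonstrator visits every state with positive probability). If the demonstrators do not all have identical policies, i.e., there exist i, j ∈ {1,…,m} and s ∈ S with noise(π*(·|s), ρ*(i,s)) ≠ noise(π*(·|s), ρ*(j,s)), then the infimum over candidate policies q with strictly positive entries of L_BC(q) is strictly greater than the infimum over candidate pairs (q, r), with r : {1,…,m} × S → (0,1), of NLL(q, r). -/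
/-- A distribution on a finite action set `A`: nonnegative and summing to 1. -/
def IsDist {A : Type*} [Fintype A] (p : A → ℝ) : Prop :=
  (∀ a, 0 ≤ p a) ∧ ∑ a, p a = 1

/-- The noised distribution: `noise p ρ (a) = ρ·p(a) + (1−ρ)/n` where `n = |A|`. -/
noncomputable def noise {A : Type*} [Fintype A] (p : A → ℝ) (ρ : ℝ) : A → ℝ :=
  fun a => ρ * p a + (1 - ρ) / (Fintype.card A : ℝ)

/-- The negative log-likelihood of a candidate policy `q` and candidate expertise levels `r`. -/
noncomputable def NLL {S A : Type*} [Fintype S] [Fintype A] {m : ℕ}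
    (πstar : S → A → ℝ) (ρstar : Fin m → S → ℝ) (w : Fin m → S → ℝ)
    (q : S → A → ℝ) (r : Fin m → S → ℝ) : ℝ :=
  -∑ i, ∑ s, w i s *
    ∑ a, noise (πstar s) (ρstar i s) a * Real.log (noise (q s) (r i s) a)

/-- The behavioral-cloning loss of a candidate policy `q` (with positive entries). -/
noncomputable def LBC {S A : Type*} [Fintype S] [Fintype A] {m : ℕ}
    (πstar : S → A → ℝ) (ρstar : Fin m → S → ℝ) (w : Fin m → S → ℝ)
    (q : S → A → ℝ) : ℝ :=
  -∑ i, ∑ s, w i s *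
    ∑ a, noise (πstar s) (ρstar i s) a * Real.log (q s a)

lemma gibbs_term {x y : ℝ} (hx : 0 < x) (hy : 0 < y) :
    x * Real.log y - x * Real.log x ≤ y - x := by
  have h1 : Real.log (y / x) ≤ y / x - 1 :=
    Real.log_le_sub_one_of_pos (div_pos hy hx)
  have h2 : Real.log (y / x) = Real.log y - Real.log x := Real.log_div hy.ne' hx.ne'
  have h3 : x * (y / x) = y := by field_simp
  have h4 := mul_le_mul_of_nonneg_left h1 hx.le
  rw [h2] at h4
  nlinarith [h4]

lemma gibbs_term_lt {x y : ℝ} (hx : 0 < x) (hy : 0 < y) (hne : x ≠ y) :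
    x * Real.log y - x * Real.log x < y - x := by
  have hyx : y / x ≠ 1 := by
    intro h
    rw [div_eq_one_iff_eq hx.ne'] at h
    exact hne h.symm
  have h1 : Real.log (y / x) < y / x - 1 :=
    Real.log_lt_sub_one_of_pos (div_pos hy hx) hyx
  have h2 : Real.log (y / x) = Real.log y - Real.log x := Real.log_div hy.ne' hx.ne'
  have h3 : x * (y / x) = y := by field_simp
  have h4 := mul_lt_mul_of_pos_left h1 hx
  rw [h2] at h4
  nlinarith [h4]

lemma gibbs_le {A : Type*} [Fintype A] (p q : A → ℝ)
    (hp : ∀ a, 0 < p a) (hq : ∀ a, 0 < q a)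
    (hps : ∑ a, p a = 1) (hqs : ∑ a, q a = 1) :
    ∑ a, p a * Real.log (q a) ≤ ∑ a, p a * Real.log (p a) := by
  have h := Finset.sum_le_sum (fun a (_ : a ∈ Finset.univ) => gibbs_term (hp a) (hq a))
  simp only [Finset.sum_sub_distrib] at h
  rw [hps, hqs] at h
  linarith

lemma gibbs_lt {A : Type*} [Fintype A] (p q : A → ℝ)
    (hp : ∀ a, 0 < p a) (hq : ∀ a, 0 < q a)
    (hps : ∑ a, p a = 1) (hqs : ∑ a, q a = 1) (hne : p ≠ q) :
    ∑ a, p a * Real.log (q a) < ∑ a, p a * Real.log (p a) := by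
  obtain ⟨a0, ha0⟩ : ∃ a, p a ≠ q a := by
    by_contra h; push_neg at h; exact hne (funext h)
  have h := Finset.sum_lt_sum (fun a (_ : a ∈ Finset.univ) => gibbs_term (hp a) (hq a))
    ⟨a0, Finset.mem_univ a0, gibbs_term_lt (hp a0) (hq a0) ha0⟩
  simp only [Finset.sum_sub_distrib] at h
  rw [hps, hqs] at h
  linarith

lemma noise_pos {A : Type*} [Fintype A] [Nonempty A] {p : A → ℝ} (hp : IsDist p)
    {ρ : ℝ} (hρ : ρ ∈ Set.Ioo (0:ℝ) 1) (a : A) : 0 < noise p ρ a := by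
  have hcard : (0:ℝ) < Fintype.card A := by exact_mod_cast Fintype.card_pos
  have h0 := hp.1 a
  have h1 : 0 < (1 - ρ) / (Fintype.card A : ℝ) := div_pos (by linarith [hρ.2]) hcard
  have h2 : 0 ≤ ρ * p a := mul_nonneg hρ.1.le h0
  simp only [noise]; linarith

lemma noise_sum {A : Type*} [Fintype A] [Nonempty A] {p : A → ℝ} (hp : IsDist p)
    (ρ : ℝ) : ∑ a, noise p ρ a = 1 := by
  have hcard : (Fintype.card A : ℝ) ≠ 0 := by
    exact_mod_cast Fintype.card_ne_zero
  simp only [noise, Finset.sum_add_distrib, ← Finset.mul_sum, hp.2, Finset.sum_const,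
    Finset.card_univ, nsmul_eq_mul]
  field_simp
  ring

/-- Proposition 3.3 (BC loss strictly exceeds the joint loss unless all demonstrators are
identical): with `w(i,s) = μ(s)/m`, `μ(s) > 0`, `∑_s μ(s) = 1`, if two demonstrators differ
at some state, then the infimum over positive candidate policies `q` of `L_BC(q)` is
strictly greater than the infimum over candidate pairs `(q, r)` of `NLL(q, r)`. -/
theorem bc_loss_gt_joint_loss {S A : Type*} [Fintype S] [Fintype A] [Nonempty S] [Nonempty A]
    {m : ℕ} (hm : 1 ≤ m)
    (πstar : S → A → ℝ) (hπ : ∀ s, IsDist (πstar s))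
    (ρstar : Fin m → S → ℝ) (hρ : ∀ i s, ρstar i s ∈ Set.Ioo (0 : ℝ) 1)
    (w : Fin m → S → ℝ)
    (μ : S → ℝ) (hμpos : ∀ s, 0 < μ s) (hμ1 : ∑ s, μ s = 1)
    (hw : ∀ i s, w i s = μ s / m)
    (hdiff : ∃ (i j : Fin m) (s : S),
      noise (πstar s) (ρstar i s) ≠ noise (πstar s) (ρstar j s)) :
    (⨅ q : {q : S → A → ℝ // (∀ s, IsDist (q s)) ∧ ∀ s a, 0 < q s a},
      LBC πstar ρstar w q.1) >
    (⨅ qr : {qr : (S → A → ℝ) × (Fin m → S → ℝ) //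
        (∀ s, IsDist (qr.1 s)) ∧ ∀ i s, qr.2 i s ∈ Set.Ioo (0 : ℝ) 1},
      NLL πstar ρstar w qr.1.1 qr.1.2) := by
  classical
  haveI : Nonempty (Fin m) := ⟨⟨0, hm⟩⟩
  have hmR : (0:ℝ) < m := by exact_mod_cast hm
  set P : Fin m → S → A → ℝ := fun i s => noise (πstar s) (ρstar i s) with hPdef
  have hPpos : ∀ i s a, 0 < P i s a := fun i s a => noise_pos (hπ s) (hρ i s) a
  have hPsum : ∀ i s, ∑ a, P i s a = 1 := fun i s => noise_sum (hπ s) _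
  set Q : S → A → ℝ := fun s a => (∑ i, P i s a) / m with hQdef
  have hQpos : ∀ s a, 0 < Q s a := fun s a =>
    div_pos (Finset.sum_pos (fun i _ => hPpos i s a) Finset.univ_nonempty) hmR
  have hQsum : ∀ s, ∑ a, Q s a = 1 := by
    intro s
    simp only [hQdef]
    rw [← Finset.sum_div, Finset.sum_comm]
    simp only [hPsum, Finset.sum_const, Finset.card_univ, Fintype.card_fin, nsmul_eq_mul,
      mul_one]
    field_simp
  have hQdist : ∀ s, IsDist (Q s) := fun s => ⟨fun a => (hQpos s a).le, hQsum s⟩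
  have hwpos : ∀ i s, 0 < w i s := fun i s => by
    rw [hw]; exact div_pos (hμpos s) hmR
  -- key rewriting lemma
  have hkey : ∀ f : S → A → ℝ,
      ∑ i, ∑ s, w i s * ∑ a, P i s a * Real.log (f s a)
        = ∑ s, μ s * ∑ a, Q s a * Real.log (f s a) := by
    intro f
    rw [Finset.sum_comm]
    refine Finset.sum_congr rfl fun s _ => ?_
    have h1 : ∀ i : Fin m, w i s * ∑ a, P i s a * Real.log (f s a)
        = ∑ a, (μ s / m) * (P i s a * Real.log (f s a)) := by
      intro i; rw [hw, Finset.mul_sum]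
    simp only [h1]
    rw [Finset.sum_comm, Finset.mul_sum]
    refine Finset.sum_congr rfl fun a _ => ?_
    simp only [hQdef]
    rw [← Finset.mul_sum, ← Finset.sum_mul]
    field_simp
  set Hstar : ℝ := ∑ i, ∑ s, w i s * ∑ a, P i s a * Real.log (P i s a) with hHstar
  set HBC : ℝ := ∑ s, μ s * ∑ a, Q s a * Real.log (Q s a) with hHBC
  -- Step 1: NLL is bounded below by -Hstar
  have hNLL_lb : ∀ qr : {qr : (S → A → ℝ) × (Fin m → S → ℝ) //
      (∀ s, IsDist (qr.1 s)) ∧ ∀ i s, qr.2 i s ∈ Set.Ioo (0 : ℝ) 1},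
      -Hstar ≤ NLL πstar ρstar w qr.1.1 qr.1.2 := by
    rintro ⟨⟨q, r⟩, hq, hr⟩
    simp only [NLL, neg_le_neg_iff]
    refine Finset.sum_le_sum fun i _ => Finset.sum_le_sum fun s _ => ?_
    refine mul_le_mul_of_nonneg_left ?_ (hwpos i s).le
    exact gibbs_le (P i s) (noise (q s) (r i s)) (hPpos i s)
      (fun a => noise_pos (hq s) (hr i s) a) (hPsum i s) (noise_sum (hq s) _)
  -- Step 2: infimum of NLL ≤ -Hstar (attained at the truth)
  have hNLL_le : (⨅ qr : {qr : (S → A → ℝ) × (Fin m → S → ℝ) //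
      (∀ s, IsDist (qr.1 s)) ∧ ∀ i s, qr.2 i s ∈ Set.Ioo (0 : ℝ) 1},
      NLL πstar ρstar w qr.1.1 qr.1.2) ≤ -Hstar := by
    have hval : NLL πstar ρstar w πstar ρstar = -Hstar := rfl
    calc _ ≤ NLL πstar ρstar w πstar ρstar :=
          ciInf_le (f := fun qr : {qr : (S → A → ℝ) × (Fin m → S → ℝ) //
              (∀ s, IsDist (qr.1 s)) ∧ ∀ i s, qr.2 i s ∈ Set.Ioo (0 : ℝ) 1} =>
              NLL πstar ρstar w qr.1.1 qr.1.2)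
            ⟨-Hstar, by rintro x ⟨qr, rfl⟩; exact hNLL_lb qr⟩
            ⟨(πstar, ρstar), hπ, hρ⟩
      _ = -Hstar := hval
  -- Step 3: LBC is bounded below by -HBC
  have hLBC_lb : ∀ q : {q : S → A → ℝ // (∀ s, IsDist (q s)) ∧ ∀ s a, 0 < q s a},
      -HBC ≤ LBC πstar ρstar w q.1 := by
    rintro ⟨q, hqd, hqp⟩
    simp only [LBC, neg_le_neg_iff]
    rw [hkey q]
    refine Finset.sum_le_sum fun s _ => ?_
    refine mul_le_mul_of_nonneg_left ?_ (hμpos s).le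
    exact gibbs_le (Q s) (q s) (hQpos s) (hqp s) (hQsum s) ((hqd s).2)
  have hLBC_ge : -HBC ≤ ⨅ q : {q : S → A → ℝ // (∀ s, IsDist (q s)) ∧ ∀ s a, 0 < q s a},
      LBC πstar ρstar w q.1 :=
    haveI : Nonempty {q : S → A → ℝ // (∀ s, IsDist (q s)) ∧ ∀ s a, 0 < q s a} :=
      ⟨⟨Q, hQdist, hQpos⟩⟩
    le_ciInf hLBC_lb
  -- Step 4: HBC < Hstar
  have hstrict : HBC < Hstar := by
    obtain ⟨i, j, s0, hij⟩ := hdiff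
    have hij' : P i s0 ≠ P j s0 := hij
    obtain ⟨i0, hi0⟩ : ∃ i0 : Fin m, P i0 s0 ≠ Q s0 := by
      by_contra h; push_neg at h
      exact hij' ((h i).trans (h j).symm)
    have e1 : (∑ i : Fin m, ∑ s : S, w i s * ∑ a, P i s a * Real.log (Q s a))
        = ∑ s : S, ∑ i : Fin m, w i s * ∑ a, P i s a * Real.log (Q s a) := Finset.sum_comm
    have e2 : (∑ i : Fin m, ∑ s : S, w i s * ∑ a, P i s a * Real.log (P i s a))
        = ∑ s : S, ∑ i : Fin m, w i s * ∑ a, P i s a * Real.log (P i s a) := Finset.sum_comm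
    rw [hHBC, hHstar, ← hkey Q, e1, e2]
    refine Finset.sum_lt_sum (fun s _ => Finset.sum_le_sum fun k _ => ?_)
      ⟨s0, Finset.mem_univ s0, ?_⟩
    · refine mul_le_mul_of_nonneg_left ?_ (hwpos k s).le
      exact gibbs_le (P k s) (Q s) (hPpos k s) (hQpos s) (hPsum k s) (hQsum s)
    · refine Finset.sum_lt_sum (fun k _ => ?_) ⟨i0, Finset.mem_univ i0, ?_⟩
      · refine mul_le_mul_of_nonneg_left ?_ (hwpos k s0).le
        exact gibbs_le (P k s0) (Q s0) (hPpos k s0) (hQpos s0) (hPsum k s0) (hQsum s0)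
      · refine mul_lt_mul_of_pos_left ?_ (hwpos i0 s0)
        exact gibbs_lt (P i0 s0) (Q s0) (hPpos i0 s0) (hQpos s0) (hPsum i0 s0)
          (hQsum s0) hi0
  calc (⨅ qr : {qr : (S → A → ℝ) × (Fin m → S → ℝ) //
        (∀ s, IsDist (qr.1 s)) ∧ ∀ i s, qr.2 i s ∈ Set.Ioo (0 : ℝ) 1},
        NLL πstar ρstar w qr.1.1 qr.1.2) ≤ -Hstar := hNLL_le
    _ < -HBC := by linarith
    _ ≤ _ := hLBC_ge
end

section
/- Lemma 3.4 (strict properness of the loss with known state embedding, discrete action model): in the demonstrator-model setup, assume w(i,s) > 0 for all i, s; fix d ∈ ℕ, a state embedding f : S → ℝ^d, and true demonstrator embeddings ω* = (ω*_1,…,ω*_m) ∈ (ℝ^d)^m, and parameterize expertise by ρ_ω(i,s) = σ(⟨f(s), ω_i⟩) for ω ∈ (ℝ^d)^m, with true expertise ρ* = ρ_{ω*}. Assume π*(·|s) is not the uniform distribution for every s ∈ S, and that for every s_0 ∈ S there exist s_1,…,s_r ∈ S and α_1,…,α_r ∈ ℝ with f(s_0) = ∑_{k=1}^r α_k · f(s_k)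 such that no real constants C_0,…,C_r with C_0 ≠ 1 satisfy both ρ*(i,s_k)/C_k ∈ (0,1) for all i, k and logit(ρ*(i,s_0)/C_0) = ∑_{k=1}^r α_k · logit(ρ*(i,s_k)/C_k) for all i ∈ {1,…,m}. Then for every candidate policy q and every ω ∈ (ℝ^d)^m, NLL(q, ρ_ω) ≥ NLL(π*, ρ_{ω*}), and equality holds only if q = π*. -/
/-- The sigmoid function `σ(x) = 1/(1 + exp(−x))`, taking values in `(0,1)`. -/
noncomputable def sigmoid (x : ℝ) : ℝ := 1 / (1 + Real.exp (-x))

/-- The logit function `logit(y) = log(y/(1−y))`, the inverse of the sigmoid on `(0,1)`. -/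
noncomputable def logit (y : ℝ) : ℝ := Real.log (y / (1 - y))

/-- Expertise levels parameterized by demonstrator embeddings `ω` and state embedding `f`:
`ρ_ω(i,s) = σ(⟨f(s), ω_i⟩)`. -/
noncomputable def expertise {S : Type*} {m d : ℕ}
    (f : S → Fin d → ℝ) (ω : Fin m → Fin d → ℝ) : Fin m → S → ℝ :=
  fun i s => sigmoid (∑ j, f s j * ω i j)

lemma aux_sigmoid_pos (x : ℝ) : 0 < sigmoid x := by
  unfold sigmoid; positivity

lemma aux_sigmoid_lt_one (x : ℝ) : sigmoid x < 1 := by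
  unfold sigmoid
  rw [div_lt_one (by positivity)]
  linarith [Real.exp_pos (-x)]

lemma aux_logit_sigmoid (x : ℝ) : logit (sigmoid x) = x := by
  unfold logit sigmoid
  have h : 0 < 1 + Real.exp (-x) := by positivity
  have key : (1 / (1 + Real.exp (-x))) / (1 - 1 / (1 + Real.exp (-x))) = Real.exp x := by
    rw [Real.exp_neg]
    have hE : Real.exp x ≠ 0 := Real.exp_ne_zero x
    field_simp
    ring
  rw [key, Real.log_exp]

lemma aux_noise_pos {A : Type*} [Fintype A] [Nonempty A] (p : A → ℝ) (hp : ∀ a, 0 ≤ p a)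
    {ρ : ℝ} (h0 : 0 < ρ) (h1 : ρ < 1) (a : A) : 0 < noise p ρ a := by
  have hc : (0:ℝ) < (Fintype.card A : ℝ) := by exact_mod_cast Fintype.card_pos
  have h2 : 0 ≤ ρ * p a := mul_nonneg h0.le (hp a)
  have h3 : 0 < (1 - ρ) / (Fintype.card A : ℝ) := div_pos (by linarith) hc
  unfold noise; linarith

lemma aux_noise_sum {A : Type*} [Fintype A] [Nonempty A] (p : A → ℝ) (hp : ∑ a, p a = 1)
    (ρ : ℝ) : ∑ a, noise p ρ a = 1 := by
  have hc : (Fintype.card A : ℝ) ≠ 0 := by exact_mod_cast Fintype.card_ne_zero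
  unfold noise
  rw [Finset.sum_add_distrib, ← Finset.mul_sum, hp, Finset.sum_const, Finset.card_univ,
    nsmul_eq_mul]
  field_simp
  ring

lemma aux_gibbs {A : Type*} [Fintype A] (p u : A → ℝ)
    (hp0 : ∀ a, 0 ≤ p a) (hp1 : ∑ a, p a = 1)
    (hu0 : ∀ a, 0 < u a) (hu1 : ∑ a, u a = 1) :
    (∑ a, p a * Real.log (u a) ≤ ∑ a, p a * Real.log (p a)) ∧
    ((∑ a, p a * Real.log (u a)) = (∑ a, p a * Real.log (p a)) → p = u) := by
  set g : A → ℝ := fun a => u a - p a - p a * (Real.log (u a) - Real.log (p a)) with hg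
  have hg0 : ∀ a, 0 ≤ g a := by
    intro a
    rcases eq_or_lt_of_le (hp0 a) with h | h
    · simp [hg, ← h]; linarith [(hu0 a).le]
    · have hlog : Real.log (u a) - Real.log (p a) = Real.log (u a / p a) := by
        rw [Real.log_div (hu0 a).ne' h.ne']
      have hle : Real.log (u a / p a) ≤ u a / p a - 1 :=
        Real.log_le_sub_one_of_pos (div_pos (hu0 a) h)
      have : p a * Real.log (u a / p a) ≤ p a * (u a / p a - 1) :=
        mul_le_mul_of_nonneg_left hle h.le
      have hpe : p a * (u a / p a - 1) = u a - p a := by field_simp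
      simp only [hg]
      rw [hlog]
      linarith [hpe ▸ this]
  have hsum : ∑ a, g a = (∑ a, p a * Real.log (p a)) - ∑ a, p a * Real.log (u a) := by
    simp only [hg, mul_sub]
    rw [Finset.sum_sub_distrib, Finset.sum_sub_distrib, Finset.sum_sub_distrib, hu1, hp1]
    ring
  have hsnn : 0 ≤ ∑ a, g a := Finset.sum_nonneg fun a _ => hg0 a
  constructor
  · linarith
  · intro heq
    have hz : ∑ a, g a = 0 := by rw [hsum, heq]; ring
    have hga : ∀ a ∈ Finset.univ, g a = 0 :=
      (Finset.sum_eq_zero_iff_of_nonneg fun a _ => hg0 a).mp hz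
    funext a
    have ha := hga a (Finset.mem_univ a)
    rcases eq_or_lt_of_le (hp0 a) with h | h
    · exfalso
      have : g a = u a := by simp [hg, ← h]
      rw [this] at ha
      exact (hu0 a).ne' ha
    · by_contra hne
      have hlog : Real.log (u a) - Real.log (p a) = Real.log (u a / p a) := by
        rw [Real.log_div (hu0 a).ne' h.ne']
      have hd1 : u a / p a ≠ 1 := by
        intro hc
        exact hne (by field_simp at hc; linarith)
      have hlt : Real.log (u a / p a) < u a / p a - 1 :=
        Real.log_lt_sub_one_of_pos (div_pos (hu0 a) h) hd1
      have : p a * Real.log (u a / p a) < p a * (u a / p a - 1) :=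
        mul_lt_mul_of_pos_left hlt h
      have hpe : p a * (u a / p a - 1) = u a - p a := by field_simp
      simp only [hg] at ha
      rw [hlog] at ha
      nlinarith

/-- Lemma 3.4 (strict properness of the loss with known state embedding, discrete action
model): with positive weights `w`, expertise parameterized by `ρ_ω(i,s) = σ(⟨f(s), ω_i⟩)`,
the true policy non-uniform at every state, and for every state `s_0` a linear dependence
`f(s_0) = ∑_k α_k f(s_k)` such that no constants `C_0,…,C_r` with `C_0 ≠ 1` satisfy both
`ρ*(i,s_k)/C_k ∈ (0,1)` for all `i,k` and
`logit(ρ*(i,s_0)/C_0) = ∑_k α_k·logit(ρ*(i,s_k)/C_k)` for all `i`, we have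
`NLL(q, ρ_ω) ≥ NLL(π*, ρ_{ω*})` for every candidate `(q, ω)`, with equality only if
`q = π*`. -/
theorem strictly_proper_loss {S A : Type*} [Fintype S] [Fintype A] [Nonempty S] [Nonempty A]
    {m d : ℕ} (hm : 1 ≤ m)
    (πstar : S → A → ℝ) (hπ : ∀ s, IsDist (πstar s))
    (w : Fin m → S → ℝ) (hw : ∀ i s, 0 < w i s) (hw1 : ∑ i, ∑ s, w i s = 1)
    (f : S → Fin d → ℝ) (ωstar : Fin m → Fin d → ℝ)
    (hnu : ∀ s, ∃ a, πstar s a ≠ 1 / (Fintype.card A : ℝ))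
    (hident : ∀ s₀ : S, ∃ (r : ℕ) (t : Fin r → S) (α : Fin r → ℝ),
      (∀ j, f s₀ j = ∑ k, α k * f (t k) j) ∧
      ¬ ∃ (C₀ : ℝ) (C : Fin r → ℝ), C₀ ≠ 1 ∧
        (∀ i, expertise f ωstar i s₀ / C₀ ∈ Set.Ioo (0 : ℝ) 1) ∧
        (∀ i k, expertise f ωstar i (t k) / C k ∈ Set.Ioo (0 : ℝ) 1) ∧
        (∀ i, logit (expertise f ωstar i s₀ / C₀) =
          ∑ k, α k * logit (expertise f ωstar i (t k) / C k))) :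
    ∀ (q : S → A → ℝ), (∀ s, IsDist (q s)) → ∀ ω : Fin m → Fin d → ℝ,
      NLL πstar (expertise f ωstar) w q (expertise f ω) ≥
        NLL πstar (expertise f ωstar) w πstar (expertise f ωstar) ∧
      (NLL πstar (expertise f ωstar) w q (expertise f ω) =
        NLL πstar (expertise f ωstar) w πstar (expertise f ωstar) → q = πstar) := by
  intro q hq ω
  classical
  set ρ : Fin m → S → ℝ := expertise f ωstar with hρdef
  set r : Fin m → S → ℝ := expertise f ω with hrdef
  have hρ0 : ∀ i s, 0 < ρ i s := fun i s => aux_sigmoid_pos _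
  have hρ1 : ∀ i s, ρ i s < 1 := fun i s => aux_sigmoid_lt_one _
  have hr0 : ∀ i s, 0 < r i s := fun i s => aux_sigmoid_pos _
  have hr1 : ∀ i s, r i s < 1 := fun i s => aux_sigmoid_lt_one _
  have hG : ∀ (i : Fin m) (s : S),
      (∑ a, noise (πstar s) (ρ i s) a * Real.log (noise (q s) (r i s) a) ≤
        ∑ a, noise (πstar s) (ρ i s) a * Real.log (noise (πstar s) (ρ i s) a)) ∧
      ((∑ a, noise (πstar s) (ρ i s) a * Real.log (noise (q s) (r i s) a)) =
        (∑ a, noise (πstar s) (ρ i s) a * Real.log (noise (πstar s) (ρ i s) a)) →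
        noise (πstar s) (ρ i s) = noise (q s) (r i s)) := fun i s =>
    aux_gibbs (noise (πstar s) (ρ i s)) (noise (q s) (r i s))
      (fun a => (aux_noise_pos (πstar s) (hπ s).1 (hρ0 i s) (hρ1 i s) a).le)
      (aux_noise_sum (πstar s) (hπ s).2 (ρ i s))
      (fun a => aux_noise_pos (q s) (hq s).1 (hr0 i s) (hr1 i s) a)
      (aux_noise_sum (q s) (hq s).2 (r i s))
  set D : Fin m → S → ℝ := fun i s =>
    (∑ a, noise (πstar s) (ρ i s) a * Real.log (noise (πstar s) (ρ i s) a)) -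
      ∑ a, noise (πstar s) (ρ i s) a * Real.log (noise (q s) (r i s) a) with hD
  have hdiff : NLL πstar ρ w q r - NLL πstar ρ w πstar ρ = ∑ i, ∑ s, w i s * D i s := by
    simp only [NLL, hD]
    rw [show ∀ (X Y : ℝ), -X - -Y = Y - X by intros; ring, ← Finset.sum_sub_distrib]
    refine Finset.sum_congr rfl fun i _ => ?_
    rw [← Finset.sum_sub_distrib]
    exact Finset.sum_congr rfl fun s _ => by ring
  have hterm : ∀ (i : Fin m), ∀ s, 0 ≤ w i s * D i s := fun i s =>
    mul_nonneg (hw i s).le (by simp only [hD]; linarith [(hG i s).1])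
  have hge : NLL πstar ρ w q r ≥ NLL πstar ρ w πstar ρ := by
    have : 0 ≤ ∑ i, ∑ s, w i s * D i s :=
      Finset.sum_nonneg fun i _ => Finset.sum_nonneg fun s _ => hterm i s
    linarith [hdiff]
  refine ⟨hge, fun heq => ?_⟩
  -- From equality, each Gibbs term is tight, so noise distributions coincide.
  have hz : ∑ i, ∑ s, w i s * D i s = 0 := by rw [← hdiff, heq]; ring
  have hDz : ∀ (i : Fin m) (s : S), D i s = 0 := by
    intro i s
    have h1 := (Finset.sum_eq_zero_iff_of_nonneg
      (fun i _ => Finset.sum_nonneg fun s _ => hterm i s)).mp hz i (Finset.mem_univ i)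
    have h2 := (Finset.sum_eq_zero_iff_of_nonneg (fun s _ => hterm i s)).mp h1 s
      (Finset.mem_univ s)
    have := hw i s
    rcases mul_eq_zero.mp h2 with h | h
    · exact absurd h this.ne'
    · exact h
  have hnoise : ∀ (i : Fin m) (s : S), noise (πstar s) (ρ i s) = noise (q s) (r i s) := by
    intro i s
    refine (hG i s).2 ?_
    have := hDz i s
    simp only [hD] at this
    linarith
  -- Key pointwise identity
  have hcard : (0:ℝ) < (Fintype.card A : ℝ) := by exact_mod_cast Fintype.card_pos
  have hkey : ∀ (i : Fin m) (s : S) (a : A),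
      r i s * (q s a - 1 / (Fintype.card A : ℝ)) =
        ρ i s * (πstar s a - 1 / (Fintype.card A : ℝ)) := by
    intro i s a
    have h := congrFun (hnoise i s) a
    simp only [noise] at h
    linear_combination -h
  choose a₀ ha₀ using hnu
  set C : S → ℝ := fun s =>
    (q s (a₀ s) - 1 / (Fintype.card A : ℝ)) / (πstar s (a₀ s) - 1 / (Fintype.card A : ℝ))
    with hCdef
  have i0 : Fin m := ⟨0, hm⟩
  have hπd : ∀ s, πstar s (a₀ s) - 1 / (Fintype.card A : ℝ) ≠ 0 :=
    fun s => sub_ne_zero_of_ne (ha₀ s)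
  have hqd : ∀ s, q s (a₀ s) - 1 / (Fintype.card A : ℝ) ≠ 0 := by
    intro s h
    have hk := hkey i0 s (a₀ s)
    rw [h, mul_zero] at hk
    exact mul_ne_zero (hρ0 i0 s).ne' (hπd s) hk.symm
  have hrC : ∀ (i : Fin m) (s : S), r i s = ρ i s / C s := by
    intro i s
    have hk := hkey i s (a₀ s)
    simp only [hCdef]
    rw [div_div_eq_mul_div, eq_div_iff (hqd s)]
    exact hk
  have hC1 : ∀ s, C s = 1 := by
    intro s₀
    by_contra hne
    obtain ⟨rr, t, α, hlin, hno⟩ := hident s₀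
    refine hno ⟨C s₀, fun k => C (t k), hne, ?_, ?_, ?_⟩
    · intro i
      rw [← hrC i s₀]
      exact ⟨hr0 i s₀, hr1 i s₀⟩
    · intro i k
      rw [← hrC i (t k)]
      exact ⟨hr0 i (t k), hr1 i (t k)⟩
    · intro i
      rw [← hrC i s₀]
      have hrw : ∀ k : Fin rr, ρ i (t k) / C (t k) = r i (t k) := fun k => (hrC i (t k)).symm
      simp only [hrw]
      have hlogit : ∀ s : S, logit (r i s) = ∑ j, f s j * ω i j := by
        intro s
        simp only [hrdef, expertise]
        exact aux_logit_sigmoid _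
      simp only [hlogit]
      calc ∑ j, f s₀ j * ω i j = ∑ j, (∑ k, α k * f (t k) j) * ω i j :=
            Finset.sum_congr rfl fun j _ => by rw [hlin j]
        _ = ∑ k, α k * ∑ j, f (t k) j * ω i j := by
            simp_rw [Finset.sum_mul, Finset.mul_sum, ← mul_assoc]
            rw [Finset.sum_comm]
  funext s a
  have hk := hkey i0 s a
  rw [hrC i0 s, hC1 s, div_one] at hk
  have := hρ0 i0 s
  have h2 : q s a - 1 / (Fintype.card A : ℝ) = πstar s a - 1 / (Fintype.card A : ℝ) :=
    mul_left_cancel₀ this.ne' hk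
  linarith
end
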